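/- Let G be a simple graph on a finite vertex set V in which every vertex has degree at least 2, let a, b ∈ V with a ≠ b and a, b not adjacent in G, and let G' be the simple graph obtained from G by adding the edge {a,b}. Define s_AA^H(u,v) = ∑_{w ∈ N_H(u) ∩ N_H(v)} 1/log(deg_H(w)) for a graph H. Then for all vertices u, v ∈ V, |s_AA^{G'}(u,v) − s_AA^G(u,v)| ≤ 1/log 2. -/

import Mathlib

open Finset

private lemma aa_one_div_log_bounds {n : ℕ} (hn : 2 ≤ n) :
    0 ≤ 1 / Real.log (n : ℝ) ∧ 1 / Real.log (n : ℝ) ≤ 1 / Real.log 2 := by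
  have h2 : (0:ℝ) < Real.log 2 := Real.log_pos one_lt_two
  have hn' : (2:ℝ) ≤ (n:ℝ) := by exact_mod_cast hn
  have hl : Real.log 2 ≤ Real.log (n:ℝ) := Real.log_le_log (by norm_num) hn'
  have hl0 : 0 < Real.log (n:ℝ) := lt_of_lt_of_le h2 hl
  exact ⟨le_of_lt (by positivity), one_div_le_one_div_of_le h2 hl⟩

private lemma aa_term_diff_bound {x : ℝ} (hx : 2 ≤ x) :
    |1 / Real.log (x + 1) - 1 / Real.log x| ≤ 1 / (2 * Real.log 2) := by
  have h2 : (0:ℝ) < Real.log 2 := Real.log_pos one_lt_two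
  have hlx : Real.log 2 ≤ Real.log x := Real.log_le_log (by norm_num) hx
  have hlx0 : 0 < Real.log x := lt_of_lt_of_le h2 hlx
  have hly1 : 1 ≤ Real.log (x + 1) := by
    have h3 : Real.exp 1 ≤ x + 1 := by
      have := Real.exp_one_lt_d9; linarith
    calc (1:ℝ) = Real.log (Real.exp 1) := (Real.log_exp 1).symm
      _ ≤ Real.log (x + 1) := Real.log_le_log (Real.exp_pos 1) h3
  have hxy : Real.log x ≤ Real.log (x + 1) := Real.log_le_log (by linarith) (by linarith)
  have hly0 : (0:ℝ) < Real.log (x + 1) := by linarith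
  have hdnum : Real.log (x + 1) - Real.log x ≤ 1 / 2 := by
    have hd : Real.log (x + 1) - Real.log x = Real.log ((x + 1) / x) := by
      rw [Real.log_div (by linarith) (by linarith)]
    rw [hd]
    have h1 : Real.log ((x + 1) / x) ≤ (x + 1) / x - 1 :=
      Real.log_le_sub_one_of_pos (by positivity)
    have he : (x + 1) / x - 1 = 1 / x := by field_simp; ring
    rw [he] at h1
    have : 1 / x ≤ 1 / 2 := one_div_le_one_div_of_le two_pos hx
    linarith
  have hnn : 0 ≤ 1 / Real.log x - 1 / Real.log (x + 1) := by
    have := one_div_le_one_div_of_le hlx0 hxy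
    linarith
  rw [abs_sub_comm, abs_of_nonneg hnn]
  have heq : 1 / Real.log x - 1 / Real.log (x + 1)
      = (Real.log (x + 1) - Real.log x) / (Real.log x * Real.log (x + 1)) := by
    field_simp
  rw [heq]
  have h12 : 1 / (2 * Real.log 2) = (1 / 2) / (Real.log 2) := by ring
  rw [h12]
  apply div_le_div₀ (by norm_num) hdnum h2
  nlinarith

private lemma aa_one_sided {V : Type*} [DecidableEq V]
    (f f' : V → ℝ) (S S' : Finset V) (c : V)
    (hsub : S ⊆ S') (hsub' : S' ⊆ insert c S)
    (heq : ∀ w ∈ S, f' w = f w)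
    (hbd : ∀ w ∈ S', 0 ≤ f' w ∧ f' w ≤ 1 / Real.log 2) :
    |∑ w ∈ S', f' w - ∑ w ∈ S, f w| ≤ 1 / Real.log 2 := by
  have h2 : (0:ℝ) < Real.log 2 := Real.log_pos one_lt_two
  have hS : ∑ w ∈ S, f w = ∑ w ∈ S, f' w :=
    Finset.sum_congr rfl (fun w hw => (heq w hw).symm)
  rw [hS, ← Finset.sum_sdiff hsub, add_sub_cancel_right]
  have hT : S' \ S ⊆ {c} := by
    intro w hw
    rcases Finset.mem_sdiff.mp hw with ⟨h1, hw2⟩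
    rcases Finset.mem_insert.mp (hsub' h1) with h | h
    · simpa using h
    · exact absurd h hw2
  rw [abs_of_nonneg (Finset.sum_nonneg fun w hw => (hbd w (Finset.mem_sdiff.mp hw).1).1)]
  calc ∑ w ∈ S' \ S, f' w ≤ ∑ _w ∈ S' \ S, 1 / Real.log 2 :=
        Finset.sum_le_sum fun w hw => (hbd w (Finset.mem_sdiff.mp hw).1).2
    _ = ((S' \ S).card : ℝ) * (1 / Real.log 2) := by
        rw [Finset.sum_const, nsmul_eq_mul]
    _ ≤ 1 * (1 / Real.log 2) := by
        apply mul_le_mul_of_nonneg_right _ (by positivity)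
        have hc := Finset.card_le_card hT
        simp only [Finset.card_singleton] at hc
        exact_mod_cast hc
    _ = 1 / Real.log 2 := one_mul _

private lemma aa_aux {V : Type*} [Fintype V] [DecidableEq V]
    (G G' : SimpleGraph V) [DecidableRel G.Adj] [DecidableRel G'.Adj]
    (hdeg : ∀ w : V, 2 ≤ G.degree w)
    (a b : V) (hab : a ≠ b) (hnadj : ¬ G.Adj a b)
    (hG' : ∀ x y, G'.Adj x y ↔ G.Adj x y ∨ (x = a ∧ y = b) ∨ (x = b ∧ y = a))
    (v : V) :
    |(∑ w ∈ G'.neighborFinset a ∩ G'.neighborFinset v, 1 / Real.log (G'.degree w)) -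
      (∑ w ∈ G.neighborFinset a ∩ G.neighborFinset v, 1 / Real.log (G.degree w))| ≤
      1 / Real.log 2 := by
  have hmono : ∀ x y : V, G.Adj x y → G'.Adj x y := fun x y h => (hG' x y).mpr (Or.inl h)
  have hdegle : ∀ w : V, G.degree w ≤ G'.degree w := by
    intro w
    apply Finset.card_le_card
    intro y hy
    rw [SimpleGraph.mem_neighborFinset] at hy ⊢
    exact hmono _ _ hy
  apply aa_one_sided (fun w => 1 / Real.log (G.degree w))
    (fun w => 1 / Real.log (G'.degree w)) _ _ b
  · apply Finset.inter_subset_inter <;>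
      · intro y hy
        rw [SimpleGraph.mem_neighborFinset] at hy ⊢
        exact hmono _ _ hy
  · intro w hw
    rcases Finset.mem_inter.mp hw with ⟨h1, h2⟩
    rw [SimpleGraph.mem_neighborFinset, hG'] at h1 h2
    by_cases hwb : w = b
    · subst hwb; exact Finset.mem_insert_self _ _
    · have haw : G.Adj a w := by
        rcases h1 with h | ⟨_, h⟩ | ⟨h, _⟩
        · exact h
        · exact absurd h hwb
        · exact absurd h hab
      have hvw : G.Adj v w := by
        rcases h2 with h | ⟨_, h⟩ | ⟨_, h⟩
        · exact h
        · exact absurd h hwb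
        · exact absurd h haw.ne'
      exact Finset.mem_insert_of_mem (Finset.mem_inter.mpr
        ⟨(SimpleGraph.mem_neighborFinset _ _ _).mpr haw,
         (SimpleGraph.mem_neighborFinset _ _ _).mpr hvw⟩)
  · intro w hw
    rcases Finset.mem_inter.mp hw with ⟨h1, _⟩
    rw [SimpleGraph.mem_neighborFinset] at h1
    have hwa : w ≠ a := fun h => G.irrefl (h ▸ h1)
    have hwb : w ≠ b := fun h => hnadj (h ▸ h1)
    have hdd : G'.degree w = G.degree w := by
      unfold SimpleGraph.degree
      congr 1
      ext y
      simp only [SimpleGraph.mem_neighborFinset, hG']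
      constructor
      · rintro (h | ⟨h, _⟩ | ⟨h, _⟩)
        · exact h
        · exact absurd h hwa
        · exact absurd h hwb
      · exact Or.inl
    simp only [hdd]
  · intro w _
    exact aa_one_div_log_bounds (le_trans (hdeg w) (hdegle w))

/-- Adding one edge changes the Adamic–Adar score of any pair by at most `1/log 2`,
provided every vertex has degree at least 2. -/
theorem adamic_adar_sensitivity {V : Type*} [Fintype V] [DecidableEq V]
    (G G' : SimpleGraph V) [DecidableRel G.Adj] [DecidableRel G'.Adj]
    (hdeg : ∀ w : V, 2 ≤ G.degree w)
    (a b : V) (hab : a ≠ b) (hnadj : ¬ G.Adj a b)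
    (hG' : ∀ x y, G'.Adj x y ↔ G.Adj x y ∨ (x = a ∧ y = b) ∨ (x = b ∧ y = a)) :
    ∀ u v : V,
      |(∑ w ∈ G'.neighborFinset u ∩ G'.neighborFinset v,
          1 / Real.log (G'.degree w)) -
        (∑ w ∈ G.neighborFinset u ∩ G.neighborFinset v,
          1 / Real.log (G.degree w))| ≤ 1 / Real.log 2 := by
  intro u v
  have h2 : (0:ℝ) < Real.log 2 := Real.log_pos one_lt_two
  have hG'' : ∀ x y, G'.Adj x y ↔ G.Adj x y ∨ (x = b ∧ y = a) ∨ (x = a ∧ y = b) := by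
    intro x y; rw [hG']; tauto
  have hnadj' : ¬ G.Adj b a := fun h => hnadj h.symm
  by_cases hua : u = a
  · rw [hua]; exact aa_aux G G' hdeg a b hab hnadj hG' v
  by_cases hub : u = b
  · rw [hub]; exact aa_aux G G' hdeg b a hab.symm hnadj' hG'' v
  by_cases hva : v = a
  · rw [hva]
    rw [Finset.inter_comm (G'.neighborFinset u), Finset.inter_comm (G.neighborFinset u)]
    exact aa_aux G G' hdeg a b hab hnadj hG' u
  by_cases hvb : v = b
  · rw [hvb]
    rw [Finset.inter_comm (G'.neighborFinset u), Finset.inter_comm (G.neighborFinset u)]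
    exact aa_aux G G' hdeg b a hab.symm hnadj' hG'' u
  -- main case: u, v ∉ {a, b}
  have hNeq : ∀ x : V, x ≠ a → x ≠ b → G'.neighborFinset x = G.neighborFinset x := by
    intro x hxa hxb
    ext y
    simp only [SimpleGraph.mem_neighborFinset, hG']
    constructor
    · rintro (h | ⟨h, _⟩ | ⟨h, _⟩)
      · exact h
      · exact absurd h hxa
      · exact absurd h hxb
    · exact Or.inl
  have hdega : G'.degree a = G.degree a + 1 := by
    unfold SimpleGraph.degree
    have hN : G'.neighborFinset a = insert b (G.neighborFinset a) := by
      ext y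
      simp only [SimpleGraph.mem_neighborFinset, hG', Finset.mem_insert]
      tauto
    rw [hN, Finset.card_insert_of_notMem]
    rw [SimpleGraph.mem_neighborFinset]
    exact hnadj
  have hdegb : G'.degree b = G.degree b + 1 := by
    unfold SimpleGraph.degree
    have hN : G'.neighborFinset b = insert a (G.neighborFinset b) := by
      ext y
      simp only [SimpleGraph.mem_neighborFinset, hG', Finset.mem_insert]
      tauto
    rw [hN, Finset.card_insert_of_notMem]
    rw [SimpleGraph.mem_neighborFinset]
    exact fun h => hnadj h.symm
  have hdegeq : ∀ w : V, w ≠ a → w ≠ b → G'.degree w = G.degree w := by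
    intro w hwa hwb
    unfold SimpleGraph.degree
    rw [hNeq w hwa hwb]
  rw [hNeq u hua hub, hNeq v hva hvb, ← Finset.sum_sub_distrib]
  set S := G.neighborFinset u ∩ G.neighborFinset v with hSdef
  calc |∑ w ∈ S, (1 / Real.log (G'.degree w) - 1 / Real.log (G.degree w))|
      ≤ ∑ w ∈ S, |1 / Real.log (G'.degree w) - 1 / Real.log (G.degree w)| :=
        Finset.abs_sum_le_sum_abs _ _
    _ ≤ ∑ w ∈ S, (if w ∈ ({a, b} : Finset V) then 1 / (2 * Real.log 2) else 0) := by
        apply Finset.sum_le_sum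
        intro w _
        by_cases hwa : w = a
        · rw [if_pos (by simp [hwa]), hwa, hdega]
          have hx : (2:ℝ) ≤ (G.degree a : ℝ) := by exact_mod_cast hdeg a
          push_cast
          exact aa_term_diff_bound hx
        by_cases hwb : w = b
        · rw [if_pos (by simp [hwb]), hwb, hdegb]
          have hx : (2:ℝ) ≤ (G.degree b : ℝ) := by exact_mod_cast hdeg b
          push_cast
          exact aa_term_diff_bound hx
        · rw [if_neg (by simp [hwa, hwb]), hdegeq w hwa hwb]
          simp
    _ ≤ ∑ w ∈ (Finset.univ : Finset V),
          (if w ∈ ({a, b} : Finset V) then 1 / (2 * Real.log 2) else 0) := by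
        apply Finset.sum_le_sum_of_subset_of_nonneg (Finset.subset_univ _)
        intro w _ _
        split <;> positivity
    _ = ∑ w ∈ (Finset.univ : Finset V) ∩ ({a, b} : Finset V), 1 / (2 * Real.log 2) :=
        Finset.sum_ite_mem _ _ _
    _ = (({a, b} : Finset V).card : ℝ) * (1 / (2 * Real.log 2)) := by
        rw [Finset.univ_inter, Finset.sum_const, nsmul_eq_mul]
    _ = 1 / Real.log 2 := by
        rw [Finset.card_insert_of_notMem (by simpa using hab), Finset.card_singleton]
        push_cast
        field_simp
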